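/- Let λ₁, λ₂ be real numbers that are algebraically independent over ℚ. Then every orbit of the subgroup of the homeomorphism group of ℝ² generated by τ₁, τ₂, f_{λ₁} and f_{λ₂} is dense in ℝ²; in particular the action of this group on ℝ² is topologically transitive. -/
import Mathlib


/-- The group of self-homeomorphisms of a topological space,
with `(f * g) x = f (g x)`. -/
instance homeomorphSelfGroup {X : Type*} [TopologicalSpace X] : Group (X ≃ₜ X) where
  mul f g := g.trans f
  one := Homeomorph.refl X
  inv := Homeomorph.symm
  mul_assoc _ _ _ := rfl
  one_mul _ := rfl
  mul_one _ := rfl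
  inv_mul_cancel f := Homeomorph.ext fun x => f.symm_apply_apply x

open Classical in
/-- For `λ ≠ 0`, the homeomorphism `f_λ : (x,y) ↦ (λx, λ⁻¹y)` of `ℝ²`
(and the identity for the junk value `λ = 0`). -/
noncomputable def fHomeo (l : ℝ) : (ℝ × ℝ) ≃ₜ (ℝ × ℝ) :=
  if h : l ≠ 0 then
    (Homeomorph.mulLeft₀ l h).prodCongr (Homeomorph.mulLeft₀ l⁻¹ (inv_ne_zero h))
  else Homeomorph.refl _

/-- The translation `τ₁ : (x,y) ↦ (x+1, y)` of `ℝ²`. -/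
noncomputable def tau₁ : (ℝ × ℝ) ≃ₜ (ℝ × ℝ) := Homeomorph.addLeft ((1 : ℝ), (0 : ℝ))

/-- The translation `τ₂ : (x,y) ↦ (x, y+1)` of `ℝ²`. -/
noncomputable def tau₂ : (ℝ × ℝ) ≃ₜ (ℝ × ℝ) := Homeomorph.addLeft ((0 : ℝ), (1 : ℝ))

lemma addLeft_mul' (v w : ℝ × ℝ) :
    (Homeomorph.addLeft v) * (Homeomorph.addLeft w) = Homeomorph.addLeft (v + w) := by
  refine Homeomorph.ext fun x => ?_
  show v + (w + x) = (v + w) + x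
  rw [add_assoc]

lemma addLeft_zero' : (Homeomorph.addLeft (0 : ℝ × ℝ)) = 1 :=
  Homeomorph.ext fun x => zero_add x

lemma addLeft_inv' (v : ℝ × ℝ) : (Homeomorph.addLeft v)⁻¹ = Homeomorph.addLeft (-v) := by
  refine inv_eq_of_mul_eq_one_left ?_
  rw [addLeft_mul', neg_add_cancel, addLeft_zero']

lemma conj1 (l : ℝ) (h : l ≠ 0) :
    fHomeo l * tau₁ * (fHomeo l)⁻¹ = Homeomorph.addLeft ((l, 0) : ℝ × ℝ) := by
  refine Homeomorph.ext fun x => ?_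
  show (fHomeo l) (tau₁ ((fHomeo l).symm x)) = (l, 0) + x
  simp [fHomeo, dif_pos h, tau₁, Prod.ext_iff]
  constructor <;> field_simp

lemma conj2 (l : ℝ) (h : l ≠ 0) :
    (fHomeo l)⁻¹ * tau₂ * fHomeo l = Homeomorph.addLeft ((0, l) : ℝ × ℝ) := by
  refine Homeomorph.ext fun x => ?_
  show (fHomeo l).symm (tau₂ ((fHomeo l) x)) = (0, l) + x
  simp [fHomeo, dif_pos h, tau₂, Prod.ext_iff]
  constructor <;> field_simp

/-- The additive subgroup `ℤ + ℤ·l` of `ℝ` is dense when `l` is irrational. -/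
lemma dense_int_add_int_smul {l : ℝ} (hl : Irrational l) :
    Dense ((AddSubgroup.closure ({1, l} : Set ℝ) : AddSubgroup ℝ) : Set ℝ) := by
  rcases (AddSubgroup.closure ({1, l} : Set ℝ)).dense_or_cyclic with h | ⟨a, ha⟩
  · exact h
  · exfalso
    have h1 : (1 : ℝ) ∈ AddSubgroup.closure ({1, l} : Set ℝ) :=
      AddSubgroup.subset_closure (by simp)
    have hl' : l ∈ AddSubgroup.closure ({1, l} : Set ℝ) :=
      AddSubgroup.subset_closure (by simp)
    rw [ha, AddSubgroup.mem_closure_singleton] at h1 hl'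
    obtain ⟨n, hn⟩ := h1
    obtain ⟨m, hm⟩ := hl'
    have hn0 : (n : ℝ) ≠ 0 := by
      rintro h0
      rw [zsmul_eq_mul, h0, zero_mul] at hn
      exact one_ne_zero hn.symm
    have : l = (m : ℝ) / (n : ℝ) := by
      rw [zsmul_eq_mul] at hn hm
      field_simp
      linear_combination (-(n:ℝ)) * hm + (m:ℝ) * hn
    exact hl ⟨(m : ℚ) / (n : ℚ), by push_cast [this]; ring⟩

/-- For `λ₁, λ₂` algebraically independent over `ℚ`, every orbit of the group
generated by `τ₁, τ₂, f_{λ₁}, f_{λ₂}` is dense in `ℝ²`; in particular the action is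
topologically transitive. -/
theorem affine_example_all_orbits_dense
    (l₁ l₂ : ℝ) (hind : AlgebraicIndependent ℚ ![l₁, l₂]) :
    ∀ p : ℝ × ℝ, Dense {q : ℝ × ℝ | ∃ g ∈ (Subgroup.closure
        {tau₁, tau₂, fHomeo l₁, fHomeo l₂} : Subgroup ((ℝ × ℝ) ≃ₜ (ℝ × ℝ))),
      g p = q} := by
  intro p
  set G : Subgroup ((ℝ × ℝ) ≃ₜ (ℝ × ℝ)) :=
    Subgroup.closure {tau₁, tau₂, fHomeo l₁, fHomeo l₂} with hG
  have htrans : Transcendental ℚ l₁ := by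
    simpa using hind.transcendental 0
  have hirr : Irrational l₁ := htrans.irrational
  have hl₁ : l₁ ≠ 0 := by
    rintro rfl
    exact hirr ⟨0, by simp⟩
  -- membership of the generators
  have hτ₁ : tau₁ ∈ G := Subgroup.subset_closure (by simp)
  have hτ₂ : tau₂ ∈ G := Subgroup.subset_closure (by simp)
  have hf : fHomeo l₁ ∈ G := Subgroup.subset_closure (by simp)
  -- the set of translations in G, as an additive subgroup of ℝ²
  let S : AddSubgroup (ℝ × ℝ) :=
    { carrier := {v | Homeomorph.addLeft v ∈ G}
      zero_mem' := by simpa [addLeft_zero'] using G.one_mem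
      add_mem' := fun {a b} ha hb => by
        have := G.mul_mem ha hb
        rwa [addLeft_mul'] at this
      neg_mem' := fun {a} ha => by
        have := G.inv_mem ha
        rwa [addLeft_inv'] at this }
  have h10 : ((1 : ℝ), (0 : ℝ)) ∈ S := hτ₁
  have h01 : ((0 : ℝ), (1 : ℝ)) ∈ S := hτ₂
  have hL0 : ((l₁ : ℝ), (0 : ℝ)) ∈ S := by
    have := G.mul_mem (G.mul_mem hf hτ₁) (G.inv_mem hf)
    rwa [conj1 l₁ hl₁] at this
  have h0L : ((0 : ℝ), (l₁ : ℝ)) ∈ S := by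
    have := G.mul_mem (G.mul_mem (G.inv_mem hf) hτ₂) hf
    rwa [conj2 l₁ hl₁] at this
  -- the closure of {1, l₁} in ℝ sits in S in both coordinates
  set A : AddSubgroup ℝ := AddSubgroup.closure ({1, l₁} : Set ℝ) with hA
  have hAx : ∀ a ∈ A, ((a : ℝ), (0 : ℝ)) ∈ S := by
    intro a ha
    have : A ≤ S.comap (AddMonoidHom.inl ℝ ℝ) := by
      rw [hA, AddSubgroup.closure_le]
      rintro x (rfl | rfl)
      · exact h10
      · exact hL0
    exact this ha
  have hAy : ∀ a ∈ A, ((0 : ℝ), (a : ℝ)) ∈ S := by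
    intro a ha
    have : A ≤ S.comap (AddMonoidHom.inr ℝ ℝ) := by
      rw [hA, AddSubgroup.closure_le]
      rintro x (rfl | rfl)
      · exact h01
      · exact h0L
    exact this ha
  have hprod : (A : Set ℝ) ×ˢ (A : Set ℝ) ⊆ (S : Set (ℝ × ℝ)) := by
    rintro ⟨a, b⟩ ⟨ha, hb⟩
    have : ((a : ℝ), (b : ℝ)) = ((a : ℝ), (0 : ℝ)) + ((0 : ℝ), (b : ℝ)) := by simp
    rw [this]
    exact S.add_mem (hAx a ha) (hAy b hb)
  have hdenseA : Dense ((A : Set ℝ)) := dense_int_add_int_smul hirr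
  have hdenseS : Dense (S : Set (ℝ × ℝ)) := (hdenseA.prod hdenseA).mono hprod
  -- the orbit of p contains S + p
  have hsub : (fun v => v + p) '' (S : Set (ℝ × ℝ)) ⊆
      {q : ℝ × ℝ | ∃ g ∈ G, g p = q} := by
    rintro _ ⟨v, hv, rfl⟩
    exact ⟨Homeomorph.addLeft v, hv, rfl⟩
  have himg : Dense ((fun v => v + p) '' (S : Set (ℝ × ℝ))) := by
    exact ((Homeomorph.addRight p).isDenseEmbedding.toIsDenseInducing.dense_image).mpr hdenseS
  exact himg.mono hsub
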